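/- Let ∑a_n be a series with positive terms and for each n let F_n be the set of n-initial subsums and δ(F_n) the minimal distance between distinct elements of F_n. If r_n < δ(F_n) for infinitely many n, then the achievement set A(a_n) has empty interior; in particular, if it is infinite, it is a Cantor set. -/
import Mathlib


open Set MeasureTheory Pointwise

/-- The achievement set (set of all subsums) of the series `∑ a n`. -/
noncomputable def achievementSet (a : ℕ → ℝ) : Set ℝ :=
  {x | ∃ I : Set ℕ, HasSum (fun i : I => a i) x}

/-- `tail a n` is the sum of the terms with index `≥ n`. -/
noncomputable def tail (a : ℕ → ℝ) (n : ℕ) : ℝ := ∑' i : ℕ, a (n + i)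

/-- The set of `k`-initial subsums: sums over subsets of the first `k` terms. -/
def Fset (a : ℕ → ℝ) (k : ℕ) : Set ℝ :=
  {x | ∃ I : Finset ℕ, I ⊆ Finset.range k ∧ x = ∑ i ∈ I, a i}

/-- The `k`-th iterate `I_k = ⋃_{f ∈ F_k} [f, f + r_k]`. -/
noncomputable def iter (a : ℕ → ℝ) (k : ℕ) : Set ℝ :=
  ⋃ f ∈ Fset a k, Set.Icc f (f + tail a k)

/-- A Cantor set: a nonempty compact perfect nowhere dense subset of `ℝ`. -/
def IsCantorSet (C : Set ℝ) : Prop :=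
  C.Nonempty ∧ IsCompact C ∧ Perfect C ∧ interior C = ∅

/-- A Cantorval: a nonempty compact set equal to the closure of its interior such that
both endpoints of every nontrivial connected component are accumulation points of
trivial (one-point) components. -/
def IsCantorval (P : Set ℝ) : Prop :=
  P.Nonempty ∧ IsCompact P ∧ P = closure (interior P) ∧
  ∀ x ∈ P, (connectedComponentIn P x).Nontrivial →
    ∀ y ∈ ({sInf (connectedComponentIn P x), sSup (connectedComponentIn P x)} : Set ℝ),
      ∀ ε > 0, ∃ z ∈ P, z ≠ y ∧ |z - y| < ε ∧ connectedComponentIn P z = {z}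

/-- The minimal distance between distinct elements of a set of reals. -/
noncomputable def minGap (S : Set ℝ) : ℝ :=
  sInf {d | ∃ s ∈ S, ∃ t ∈ S, s ≠ t ∧ d = |s - t|}

section aux

variable (a : ℕ → ℝ)

lemma achievement_iff (x : ℝ) :
    x ∈ achievementSet a ↔ ∃ I : Set ℕ, HasSum (I.indicator a) x := by
  constructor
  · rintro ⟨I, hI⟩; exact ⟨I, hasSum_subtype_iff_indicator.mp hI⟩
  · rintro ⟨I, hI⟩; exact ⟨I, hasSum_subtype_iff_indicator.mpr hI⟩

lemma subset_iter (hpos : ∀ n, 0 ≤ a n) (hsum : Summable a) (n : ℕ) :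
    achievementSet a ⊆ iter a n := by
  classical
  intro x hx
  obtain ⟨I, hI⟩ := (achievement_iff a x).mp hx
  have hsummI : Summable (I.indicator a) := hsum.indicator I
  have hx' : x = ∑' i, I.indicator a i := hI.tsum_eq.symm
  set f := ∑ i ∈ Finset.range n, I.indicator a i with hf
  have hindnn : ∀ i, 0 ≤ I.indicator a i := fun i =>
    Set.indicator_nonneg (fun j _ => hpos j) i
  have hindle : ∀ i, I.indicator a i ≤ a i := fun i =>
    Set.indicator_le_self' (fun j _ => hpos j) i
  have hfF : f ∈ Fset a n := by
    refine ⟨(Finset.range n).filter (· ∈ I), Finset.filter_subset _ _, ?_⟩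
    rw [hf, ← Finset.sum_filter_add_sum_filter_not (Finset.range n) (· ∈ I)]
    have h2 : ∑ i ∈ (Finset.range n).filter (fun i => ¬ i ∈ I), I.indicator a i = 0 := by
      refine Finset.sum_eq_zero fun i hi => ?_
      simp only [Finset.mem_filter] at hi
      exact Set.indicator_of_notMem hi.2 a
    have h1 : ∑ i ∈ (Finset.range n).filter (· ∈ I), I.indicator a i
        = ∑ i ∈ (Finset.range n).filter (· ∈ I), a i := by
      refine Finset.sum_congr rfl fun i hi => ?_
      simp only [Finset.mem_filter] at hi
      exact Set.indicator_of_mem hi.2 a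
    rw [h1, h2, add_zero]
  have hsplit : f + ∑' i, I.indicator a (i + n) = x := by
    rw [hx', hf]; exact Summable.sum_add_tsum_nat_add n hsummI
  have hsumtail : Summable (fun i => I.indicator a (i + n)) :=
    (summable_nat_add_iff n).mpr hsummI
  have hsumtail2 : Summable (fun i => a (n + i)) := by
    have := (summable_nat_add_iff n).mpr hsum
    simpa [add_comm] using this
  have htail_le : ∑' i, I.indicator a (i + n) ≤ tail a n := by
    refine Summable.tsum_le_tsum (fun i => ?_) hsumtail hsumtail2
    calc I.indicator a (i + n) ≤ a (i + n) := hindle _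
      _ = a (n + i) := by rw [add_comm]
  have htail_nn : 0 ≤ ∑' i, I.indicator a (i + n) :=
    tsum_nonneg fun i => hindnn _
  refine Set.mem_biUnion hfF (Set.mem_Icc.mpr ⟨by linarith, by linarith⟩)

end aux

lemma minGap_le {S : Set ℝ} {s t : ℝ} (hs : s ∈ S) (ht : t ∈ S) (hne : s ≠ t) :
    minGap S ≤ |s - t| := by
  refine csInf_le ⟨0, ?_⟩ ⟨s, hs, t, ht, hne, rfl⟩
  rintro d ⟨u, _, v, _, _, rfl⟩; exact abs_nonneg _

lemma indicator_singleton_hasSum (a : ℕ → ℝ) (n : ℕ) :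
    HasSum (({n} : Set ℕ).indicator a) (a n) := by
  classical
  have he : (({n} : Set ℕ).indicator a) = fun i => if i = n then a n else 0 := by
    funext i
    by_cases hi : i = n <;> simp [Set.indicator_apply, hi]
  rw [he]
  exact hasSum_ite_eq n (a n)

lemma achievement_compact (a : ℕ → ℝ) (hsum : Summable a) :
    IsCompact (achievementSet a) := by
  classical
  set φ : (ℕ → Bool) → ℝ := fun b => ∑' i, if b i then a i else 0 with hφ
  have hsummb : ∀ b : ℕ → Bool, Summable (fun i => if b i then a i else 0) := by
    intro b
    refine (hsum.indicator {i | b i = true}).congr fun i => ?_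
    by_cases hb : b i <;> simp [Set.indicator_apply, hb]
  have hcont : Continuous φ := by
    refine continuous_tsum (u := fun i => |a i|) (fun i => ?_) hsum.abs ?_
    · exact Continuous.comp (continuous_of_discreteTopology
        (f := fun v : Bool => if v then a i else 0)) (continuous_apply i)
    · intro i b
      by_cases hb : b i <;> simp [hb, abs_nonneg]
  have hrange : Set.range φ = achievementSet a := by
    ext x
    rw [achievement_iff]
    constructor
    · rintro ⟨b, rfl⟩
      refine ⟨{i | b i = true}, ?_⟩
      have he : ({i | b i = true} : Set ℕ).indicator a
          = fun i => if b i then a i else 0 := by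
        funext i; by_cases hb : b i <;> simp [Set.indicator_apply, hb]
      rw [he]
      exact (hsummb b).hasSum
    · rintro ⟨I, hI⟩
      refine ⟨fun i => decide (i ∈ I), ?_⟩
      have he : (fun i => if decide (i ∈ I) then a i else 0) = I.indicator a := by
        funext i; by_cases hi : i ∈ I <;> simp [Set.indicator_apply, hi]
      rw [hφ]
      simp only [he]
      exact hI.tsum_eq
  rw [← hrange]
  exact isCompact_range hcont

theorem stmt_11 (a : ℕ → ℝ) (hpos : ∀ n, 0 < a n) (hsum : Summable a)
    (h : {n : ℕ | tail a n < minGap (Fset a n)}.Infinite) :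
    interior (achievementSet a) = ∅ ∧
      ((achievementSet a).Infinite → IsCantorSet (achievementSet a)) := by
  classical
  have hpos' : ∀ n, 0 ≤ a n := fun n => (hpos n).le
  have htail0 : Filter.Tendsto (tail a) Filter.atTop (nhds 0) := by
    have he : tail a = fun n => ∑' k, a (k + n) :=
      funext fun n => tsum_congr fun k => by rw [add_comm]
    rw [he]; exact tendsto_sum_nat_add a
  have hint : interior (achievementSet a) = ∅ := by
    by_contra hne
    obtain ⟨x, hx⟩ := Set.nonempty_iff_ne_empty.mpr hne
    obtain ⟨ε, hε, hball⟩ := Metric.isOpen_iff.mp isOpen_interior x hx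
    have hballA : Metric.ball x ε ⊆ achievementSet a :=
      hball.trans interior_subset
    -- choose n in the infinite set with tail a n < ε
    obtain ⟨N, hN⟩ := Filter.eventually_atTop.mp (htail0.eventually_lt_const hε)
    obtain ⟨n, hnmem, hnN⟩ := h.exists_gt N
    have hrg : tail a n < minGap (Fset a n) := hnmem
    have hrε : tail a n < ε := hN n hnN.le
    have hrnn : 0 ≤ tail a n := tsum_nonneg fun i => (hpos _).le
    -- x is in iter a n
    have hxA : x ∈ achievementSet a := interior_subset hx
    obtain ⟨f, hfF, hxmem⟩ :=
      Set.mem_iUnion₂.mp (subset_iter a hpos' hsum n hxA)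
    have hfx : f ≤ x := hxmem.1
    have hxfr : x ≤ f + tail a n := hxmem.2
    obtain ⟨δ, hδpos, hδ1, hδ2⟩ :
        ∃ δ : ℝ, 0 < δ ∧ δ ≤ ε - tail a n ∧ δ ≤ minGap (Fset a n) - tail a n :=
      ⟨min (ε - tail a n) (minGap (Fset a n) - tail a n),
        lt_min (by linarith) (by linarith), min_le_left _ _, min_le_right _ _⟩
    have hyball : f + tail a n + δ / 2 ∈ Metric.ball x ε := by
      rw [Metric.mem_ball, Real.dist_eq, abs_lt]
      constructor <;> linarith
    have hyA : f + tail a n + δ / 2 ∈ achievementSet a := hballA hyball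
    obtain ⟨f', hf'F, hymem⟩ :=
      Set.mem_iUnion₂.mp (subset_iter a hpos' hsum n hyA)
    have hf'y : f' ≤ f + tail a n + δ / 2 := hymem.1
    have hyf'r : f + tail a n + δ / 2 ≤ f' + tail a n := hymem.2
    by_cases hfe : f' = f
    · rw [hfe] at hyf'r
      linarith
    · have hgap : minGap (Fset a n) ≤ |f - f'| := minGap_le hfF hf'F (Ne.symm hfe)
      rcases abs_cases (f - f') with ⟨habs, _⟩ | ⟨habs, _⟩ <;> rw [habs] at hgap <;> linarith
  refine ⟨hint, fun _ => ?_⟩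
  have hcomp : IsCompact (achievementSet a) := achievement_compact a hsum
  have h0 : (0 : ℝ) ∈ achievementSet a := by
    rw [achievement_iff]
    exact ⟨∅, by simpa using (hasSum_zero : HasSum (fun _ : ℕ => (0:ℝ)) 0)⟩
  refine ⟨⟨0, h0⟩, hcomp, ⟨hcomp.isClosed, ?_⟩, hint⟩
  -- every point is an accumulation point
  intro x hx
  rw [accPt_iff_nhds]
  intro U hU
  obtain ⟨ε, hε, hballU⟩ := Metric.mem_nhds_iff.mp hU
  obtain ⟨N, hN⟩ := Filter.eventually_atTop.mp
    ((hsum.tendsto_atTop_zero).eventually_lt_const hε)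
  have haN : a N < ε := by simpa using hN N le_rfl
  obtain ⟨I, hI⟩ := (achievement_iff a x).mp hx
  have hsing := indicator_singleton_hasSum a N
  by_cases hNI : N ∈ I
  · -- remove N : y = x - a N
    have hdisj : Disjoint (I \ {N}) ({N} : Set ℕ) := Set.disjoint_sdiff_left
    have hunion : (I \ {N}) ∪ {N} = I := Set.diff_union_of_subset (by simpa using hNI)
    have hind : (I \ {N}).indicator a = I.indicator a - ({N} : Set ℕ).indicator a := by
      funext i
      by_cases hi : i ∈ I <;> by_cases hiN : i = N <;>
        simp [Set.indicator_apply, hi, hiN, hNI]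
    have hy : HasSum ((I \ {N}).indicator a) (x - a N) := by
      rw [hind]; exact hI.sub hsing
    refine ⟨x - a N, ⟨hballU ?_, (achievement_iff a _).mpr ⟨_, hy⟩⟩,
      (sub_lt_self x (hpos N)).ne⟩
    rw [Metric.mem_ball, Real.dist_eq]
    rw [show x - a N - x = -(a N) by ring, abs_neg, abs_of_pos (hpos N)]
    exact haN
  · -- add N : y = x + a N
    have hind : (I ∪ {N}).indicator a = I.indicator a + ({N} : Set ℕ).indicator a := by
      funext i
      by_cases hi : i ∈ I <;> by_cases hiN : i = N <;>
        simp [Set.indicator_apply, hi, hiN, hNI]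
    have hy : HasSum ((I ∪ {N}).indicator a) (x + a N) := by
      rw [hind]; exact hI.add hsing
    refine ⟨x + a N, ⟨hballU ?_, (achievement_iff a _).mpr ⟨_, hy⟩⟩,
      (lt_add_of_pos_right x (hpos N)).ne'⟩
    rw [Metric.mem_ball, Real.dist_eq]
    rw [show x + a N - x = a N by ring, abs_of_pos (hpos N)]
    exact haN
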